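/- For any fixed odd positive integer l, the sequence m ↦ ν₂(A_{l,m}) (for m ≥ l) is 2-simple: for every integer t ≥ 0, ν₂(A_{l,2t+1}) = ν₂(A_{l,2t+2}). -/

import Mathlib

open Finset

/-- The 2-adic valuation of `A_{l,n}`, given by `ν₂(A_{l,n}) = l + Σ_{j=-l+1}^{l} ν₂(n+j)`. -/
noncomputable def nuA (l : ℕ) (n : ℤ) : ℕ :=
  l + ∑ j ∈ Finset.Icc (-(l : ℤ) + 1) (l : ℤ), padicValInt 2 (n + j)

lemma padicValInt_odd_eq_zero {n : ℤ} (hn : Odd n) : padicValInt 2 n = 0 := by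
  unfold padicValInt
  apply padicValNat.eq_zero_of_not_dvd
  intro h
  have h2 : (2 : ℤ) ∣ n := Int.natAbs_dvd_natAbs.mp (by simpa using h)
  obtain ⟨k, hk⟩ := hn
  omega

lemma sum_shift (n a b : ℤ) (f : ℤ → ℕ) :
    ∑ j ∈ Finset.Icc a b, f (n + j) = ∑ k ∈ Finset.Icc (n + a) (n + b), f k := by
  rw [← Finset.map_add_left_Icc a b n, Finset.sum_map]
  rfl

lemma key (a b : ℤ) (ha : Odd a) (hb : Odd b) (hab : a ≤ b) :
    ∑ x ∈ Finset.Icc a (b - 1), padicValInt 2 x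
      = ∑ x ∈ Finset.Icc (a + 1) b, padicValInt 2 x := by
  have e1 : ∑ x ∈ Finset.Icc a (b - 1), padicValInt 2 x
      = ∑ x ∈ Finset.Icc a b, padicValInt 2 x := by
    apply Finset.sum_subset
    · apply Finset.Icc_subset_Icc_right; omega
    · intro x hx hx'
      simp only [Finset.mem_Icc] at hx hx'
      have : x = b := by omega
      rw [this]; exact padicValInt_odd_eq_zero hb
  have e2 : ∑ x ∈ Finset.Icc (a + 1) b, padicValInt 2 x
      = ∑ x ∈ Finset.Icc a b, padicValInt 2 x := by
    apply Finset.sum_subset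
    · apply Finset.Icc_subset_Icc_left; omega
    · intro x hx hx'
      simp only [Finset.mem_Icc] at hx hx'
      have : x = a := by omega
      rw [this]; exact padicValInt_odd_eq_zero ha
  rw [e1, e2]

theorem nuA_two_simple (l : ℕ) (hl : Odd l) (t : ℕ) :
    nuA l (2 * t + 1) = nuA l (2 * t + 2) := by
  unfold nuA
  congr 1
  rw [sum_shift, sum_shift]
  rw [show (2 * (t:ℤ) + 1) + (-(l:ℤ) + 1) = 2 * t + 2 - l from by ring,
      show (2 * (t:ℤ) + 1) + (l:ℤ) = (2 * t + 2 + l) - 1 from by ring,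
      show (2 * (t:ℤ) + 2) + (-(l:ℤ) + 1) = (2 * t + 2 - l) + 1 from by ring,
      show (2 * (t:ℤ) + 2) + (l:ℤ) = 2 * t + 2 + l from by ring]
  obtain ⟨k, hk⟩ := hl
  have hlpos : 1 ≤ l := by omega
  exact key _ _ ⟨(t:ℤ) - k, by push_cast [hk]; ring⟩ ⟨(t:ℤ) + k + 1, by push_cast [hk]; ring⟩
    (by push_cast; omega)
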